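/- Let U be a finite set, F = (S_1, …, S_m) a family of nonempty subsets of U, G(U,F) the associated split graph, and t a nonnegative integer. If G(U,F) admits a Roman dominating function of weight at most 2t, then there exists a hitting set H ⊆ U of (U,F) with |H| ≤ t. -/

import Mathlib

/-- Adjacency of the split graph `G(U,F)`: the universe `α` forms a clique, each set
`S_j` has two corresponding set-vertices `s_j^1, s_j^2` (encoded as `(j, i) : Fin m × Fin 2`),
and `u ∈ α` is adjacent to `s_j^i` iff `u ∈ S_j`; the set-vertices are pairwise non-adjacent. -/
def splitAdj {α : Type*} {m : ℕ} (F : Fin m → Finset α) :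
    (α ⊕ Fin m × Fin 2) → (α ⊕ Fin m × Fin 2) → Prop
  | .inl u, .inl v => u ≠ v
  | .inl u, .inr p => u ∈ F p.1
  | .inr p, .inl u => u ∈ F p.1
  | .inr _, .inr _ => False

/-- The split graph `G(U,F)`. -/
def splitGraph {α : Type*} {m : ℕ} (F : Fin m → Finset α) :
    SimpleGraph (α ⊕ Fin m × Fin 2) where
  Adj := splitAdj F
  symm := ⟨by rintro (u|p) (v|q) h <;> simp_all [splitAdj]; exact Ne.symm h⟩
  loopless := ⟨by rintro (u|p) h <;> simp_all [splitAdj]⟩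


/-- If the split graph `G(U,F)` (with all sets `S_j` nonempty) admits a
Roman dominating function of weight at most `2t`, then `(U,F)` has a hitting set of
size at most `t`. -/
theorem splitGraph_rdf_gives_hitting_set
    {α : Type*} [Fintype α] {m : ℕ} (F : Fin m → Finset α)
    (hne : ∀ j, (F j).Nonempty) (t : ℕ)
    (hrdf : ∃ f : (α ⊕ Fin m × Fin 2) → ℕ, (∀ x, f x ≤ 2) ∧
      (∀ x, f x = 0 → ∃ y, (splitGraph F).Adj x y ∧ f y = 2) ∧
      (∑ x, f x) ≤ 2 * t) :
    ∃ H : Finset α, (∀ j : Fin m, ∃ u ∈ H, u ∈ F j) ∧ H.card ≤ t := by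
  classical
  obtain ⟨f, hf2, hdom, hw⟩ := hrdf
  set H2 : Finset α := Finset.univ.filter (fun u => f (.inl u) = 2) with hH2
  set J : Finset (Fin m) := Finset.univ.filter (fun j => ∀ u ∈ F j, f (.inl u) ≠ 2) with hJ
  have hpick : ∀ j : Fin m, (hne j).choose ∈ F j := fun j => (hne j).choose_spec
  refine ⟨H2 ∪ J.image (fun j => (hne j).choose), ?_, ?_⟩
  · intro j
    by_cases hj : ∀ u ∈ F j, f (.inl u) ≠ 2
    · exact ⟨(hne j).choose, Finset.mem_union_right _
        (Finset.mem_image.2 ⟨j, Finset.mem_filter.2 ⟨Finset.mem_univ _, hj⟩, rfl⟩), hpick j⟩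
    · push_neg at hj
      obtain ⟨u, hu, hu2⟩ := hj
      exact ⟨u, Finset.mem_union_left _
        (Finset.mem_filter.2 ⟨Finset.mem_univ _, hu2⟩), hu⟩
  · -- cardinality bound
    have hJbound : ∀ j ∈ J, 2 ≤ f (.inr (j, 0)) + f (.inr (j, 1)) := by
      intro j hj
      have hj' := (Finset.mem_filter.1 hj).2
      have key : ∀ i : Fin 2, 1 ≤ f (.inr (j, i)) := by
        intro i
        by_contra h
        have h0 : f (.inr (j, i)) = 0 := by omega
        obtain ⟨y, hadj, hy2⟩ := hdom _ h0
        rcases y with u | p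
        · exact hj' u hadj hy2
        · exact hadj
      have := key 0; have := key 1; omega
    have hsum : 2 * H2.card + 2 * J.card ≤ ∑ x, f x := by
      rw [Fintype.sum_sum_type]
      have h1 : 2 * H2.card ≤ ∑ u : α, f (.inl u) := by
        calc 2 * H2.card = ∑ u ∈ H2, 2 := by
              rw [Finset.sum_const, smul_eq_mul]; ring
          _ = ∑ u ∈ H2, f (.inl u) := by
              apply Finset.sum_congr rfl
              intro u hu
              exact ((Finset.mem_filter.1 hu).2).symm
          _ ≤ ∑ u : α, f (.inl u) :=
              Finset.sum_le_sum_of_subset (Finset.subset_univ _)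
      have h2 : 2 * J.card ≤ ∑ p : Fin m × Fin 2, f (.inr p) := by
        rw [Fintype.sum_prod_type]
        calc 2 * J.card = ∑ j ∈ J, 2 := by
              rw [Finset.sum_const, smul_eq_mul]; ring
          _ ≤ ∑ j ∈ J, ∑ i : Fin 2, f (.inr (j, i)) := by
              apply Finset.sum_le_sum
              intro j hj
              rw [Fin.sum_univ_two]
              exact hJbound j hj
          _ ≤ ∑ j : Fin m, ∑ i : Fin 2, f (.inr (j, i)) :=
              Finset.sum_le_sum_of_subset (Finset.subset_univ _)
      omega
    have hcard : (H2 ∪ J.image (fun j => (hne j).choose)).card ≤ H2.card + J.card :=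
      le_trans (Finset.card_union_le _ _)
        (by gcongr; exact Finset.card_image_le)
    omega
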